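/- Let (Ω, 𝒜, ℙ) be a probability space and let X, Y : Ω → ℝ be random variables. Then the supremum of Corr[g(X), h(Y)] over all admissible pairs (g, h) that are comonotone or antimonotone equals the supremum, over all Borel functions k : ℝ → ℝ and all monotone functions h₁, h₂ : ℝ → ℝ (each either nondecreasing or nonincreasing) such that the pair (h₁ ∘ k, h₂ ∘ k) is admissible, of Corr[h₁(k(X)), h₂(k(Y))]. -/

import Mathlib

open MeasureTheory ProbabilityTheory

/-- The Pearson correlation coefficient of two real-valued random variables. -/
noncomputable def corr {Ω : Type*} [MeasurableSpace Ω] (P : Measure Ω) (U V : Ω → ℝ) : ℝ :=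
  (∫ ω, (U ω - ∫ ω', U ω' ∂P) * (V ω - ∫ ω', V ω' ∂P) ∂P) /
    (Real.sqrt (variance U P) * Real.sqrt (variance V P))

/-- A pair `(g, h)` of Borel functions is admissible for `(X, Y)` if `g ∘ X` and `h ∘ Y`
both have finite, strictly positive variance. -/
def Admissible {Ω : Type*} [MeasurableSpace Ω] (P : Measure Ω) (X Y : Ω → ℝ)
    (g h : ℝ → ℝ) : Prop :=
  Measurable g ∧ Measurable h ∧
    MemLp (fun ω => g (X ω)) 2 P ∧ MemLp (fun ω => h (Y ω)) 2 P ∧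
    0 < variance (fun ω => g (X ω)) P ∧ 0 < variance (fun ω => h (Y ω)) P

/-- Two functions are comonotone if increments always agree in sign. -/
def Comonotone {α : Type*} (g h : α → ℝ) : Prop :=
  ∀ x x', 0 ≤ (g x - g x') * (h x - h x')

/-- Two functions are antimonotone if increments always disagree in sign. -/
def Antimonotone {α : Type*} (g h : α → ℝ) : Prop :=
  ∀ x x', (g x - g x') * (h x - h x') ≤ 0

lemma comonotone_factor (g h : ℝ → ℝ) (hgh : Comonotone g h) :
    ∃ F : ℝ → ℝ, Monotone F ∧ ∀ x, F (g x + h x) = g x := by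
  classical
  set k : ℝ → ℝ := fun x => g x + h x with hk
  have key : ∀ x x', k x ≤ k x' → g x ≤ g x' := by
    intro x x' hle
    by_contra hlt
    push_neg at hlt
    have h1 : 0 ≤ (g x - g x') * (h x - h x') := hgh x x'
    have h3 : 0 ≤ h x - h x' := by nlinarith
    have : k x' < k x := by simp only [hk]; linarith
    linarith
  have hbdd : ∀ t : ℝ, BddAbove {y | ∃ x, k x ≤ t ∧ g x = y} := by
    intro t
    refine ⟨max (g 0) (t - h 0), ?_⟩
    rintro y ⟨x, hx, rfl⟩
    rcases le_or_gt (g x) (g 0) with hc | hc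
    · exact le_max_of_le_left hc
    · have hh : h 0 ≤ h x := by nlinarith [hgh x 0]
      have : g x ≤ t - h 0 := by
        have : g x + h x ≤ t := hx
        linarith
      exact le_max_of_le_right this
  set F : ℝ → ℝ := fun t =>
    if ht : ∃ x, k x ≤ t then sSup {y | ∃ x, k x ≤ t ∧ g x = y}
    else sInf (Set.range g) with hF
  have hrangeB : ∀ t : ℝ, (∀ x, t < k x) → BddBelow (Set.range g) := by
    intro t ht
    refine ⟨min (g 0) (t - h 0), ?_⟩
    rintro y ⟨x, rfl⟩
    rcases le_or_gt (g 0) (g x) with hc | hc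
    · exact le_trans (min_le_left _ _) hc
    · have hh : h x ≤ h 0 := by nlinarith [hgh 0 x]
      have : t < g x + h x := ht x
      have : t - h 0 ≤ g x := by linarith
      exact le_trans (min_le_right _ _) this
  refine ⟨F, ?_, ?_⟩
  · intro t t' htt'
    simp only [hF]
    by_cases h1 : ∃ x, k x ≤ t
    · have h2 : ∃ x, k x ≤ t' := h1.imp fun x hx => le_trans hx htt'
      rw [dif_pos h1, dif_pos h2]
      apply csSup_le_csSup (hbdd t')
      · obtain ⟨x, hx⟩ := h1; exact ⟨g x, x, hx, rfl⟩
      · rintro y ⟨x, hx, rfl⟩; exact ⟨x, le_trans hx htt', rfl⟩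
    · by_cases h2 : ∃ x, k x ≤ t'
      · rw [dif_neg h1, dif_pos h2]
        obtain ⟨x₀, hx₀⟩ := h2
        have hb : BddBelow (Set.range g) := by
          apply hrangeB t; intro x; by_contra hc; push_neg at hc; exact h1 ⟨x, hc⟩
        calc sInf (Set.range g) ≤ g x₀ := csInf_le hb ⟨x₀, rfl⟩
          _ ≤ sSup {y | ∃ x, k x ≤ t' ∧ g x = y} := le_csSup (hbdd t') ⟨x₀, hx₀, rfl⟩
      · rw [dif_neg h1, dif_neg h2]
  · intro x
    have h1 : ∃ x', k x' ≤ k x := ⟨x, le_refl _⟩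
    simp only [hF]
    rw [dif_pos h1]
    apply IsGreatest.csSup_eq
    exact ⟨⟨x, le_refl _, rfl⟩, by rintro y ⟨x', hx', rfl⟩; exact key x' x hx'⟩

lemma comonotone_common (g h : ℝ → ℝ) (hgh : Comonotone g h) :
    ∃ h₁ h₂ : ℝ → ℝ, Monotone h₁ ∧ Monotone h₂ ∧
      (∀ x, h₁ (g x + h x) = g x) ∧ (∀ x, h₂ (g x + h x) = h x) := by
  obtain ⟨F, hF, hFe⟩ := comonotone_factor g h hgh
  have hgh' : Comonotone h g := fun x x' => by
    have := hgh x x'; nlinarith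
  obtain ⟨G, hG, hGe⟩ := comonotone_factor h g hgh'
  exact ⟨F, G, hF, hG, hFe, fun x => by rw [add_comm]; exact hGe x⟩

theorem coanti_correlation_eq_sup_over_common_factor
    {Ω : Type*} [MeasurableSpace Ω] (P : Measure Ω) [IsProbabilityMeasure P]
    (X Y : Ω → ℝ) (hX : Measurable X) (hY : Measurable Y) :
    sSup {r : ℝ | ∃ g h : ℝ → ℝ, Admissible P X Y g h ∧
        (Comonotone g h ∨ Antimonotone g h) ∧
        r = corr P (fun ω => g (X ω)) (fun ω => h (Y ω))} =
      sSup {r : ℝ | ∃ k h₁ h₂ : ℝ → ℝ, Measurable k ∧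
        (Monotone h₁ ∨ Antitone h₁) ∧ (Monotone h₂ ∨ Antitone h₂) ∧
        Admissible P X Y (h₁ ∘ k) (h₂ ∘ k) ∧
        r = corr P (fun ω => h₁ (k (X ω))) (fun ω => h₂ (k (Y ω)))} := by
  congr 1
  ext r
  constructor
  · rintro ⟨g, h, hadm, hco | hanti, hr⟩
    · -- comonotone case: k = g + h
      obtain ⟨h₁, h₂, hm1, hm2, he1, he2⟩ := comonotone_common g h hco
      set k : ℝ → ℝ := fun x => g x + h x with hk
      have e1 : h₁ ∘ k = g := funext fun x => he1 x
      have e2 : h₂ ∘ k = h := funext fun x => he2 x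
      refine ⟨k, h₁, h₂, hadm.1.add hadm.2.1, Or.inl hm1, Or.inl hm2, ?_, ?_⟩
      · rw [e1, e2]; exact hadm
      · have f1 : (fun ω => h₁ (k (X ω))) = fun ω => g (X ω) := funext fun ω => he1 (X ω)
        have f2 : (fun ω => h₂ (k (Y ω))) = fun ω => h (Y ω) := funext fun ω => he2 (Y ω)
        rw [f1, f2]; exact hr
    · -- antimonotone case: g and -h are comonotone, k = g - h
      have hco : Comonotone g (fun x => -h x) := fun x x' => by
        have := hanti x x'
        show 0 ≤ (g x - g x') * (-h x - -h x')
        nlinarith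
      obtain ⟨h₁, h₂, hm1, hm2, he1, he2⟩ := comonotone_common g (fun x => -h x) hco
      set k : ℝ → ℝ := fun x => g x + -h x with hk
      have e1 : h₁ ∘ k = g := funext fun x => he1 x
      have e2 : (fun t => -h₂ t) ∘ k = h := funext fun x => by
        have := he2 x
        simp only [Function.comp, hk]
        rw [this]; ring
      refine ⟨k, h₁, fun t => -h₂ t, hadm.1.add hadm.2.1.neg, Or.inl hm1,
        Or.inr hm2.neg, ?_, ?_⟩
      · rw [e1, e2]; exact hadm
      · have f1 : (fun ω => h₁ (k (X ω))) = fun ω => g (X ω) := funext fun ω => he1 (X ω)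
        have f2 : (fun ω => -h₂ (k (Y ω))) = fun ω => h (Y ω) := funext fun ω => by
          have := he2 (Y ω); rw [show k (Y ω) = g (Y ω) + -h (Y ω) from rfl, this]; ring
        rw [f1, f2]; exact hr
  · rintro ⟨k, h₁, h₂, hk, hm1, hm2, hadm, hr⟩
    refine ⟨h₁ ∘ k, h₂ ∘ k, hadm, ?_, hr⟩
    rcases hm1 with hm1 | hm1 <;> rcases hm2 with hm2 | hm2
    · refine Or.inl fun x x' => ?_
      rcases le_total (k x) (k x') with hc | hc
      · have a1 := hm1 hc; have a2 := hm2 hc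
        simp only [Function.comp]; nlinarith
      · have a1 := hm1 hc; have a2 := hm2 hc
        simp only [Function.comp]; nlinarith
    · refine Or.inr fun x x' => ?_
      rcases le_total (k x) (k x') with hc | hc
      · have a1 := hm1 hc; have a2 := hm2 hc
        simp only [Function.comp]; nlinarith
      · have a1 := hm1 hc; have a2 := hm2 hc
        simp only [Function.comp]; nlinarith
    · refine Or.inr fun x x' => ?_
      rcases le_total (k x) (k x') with hc | hc
      · have a1 := hm1 hc; have a2 := hm2 hc
        simp only [Function.comp]; nlinarith
      · have a1 := hm1 hc; have a2 := hm2 hc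
        simp only [Function.comp]; nlinarith
    · refine Or.inl fun x x' => ?_
      rcases le_total (k x) (k x') with hc | hc
      · have a1 := hm1 hc; have a2 := hm2 hc
        simp only [Function.comp]; nlinarith
      · have a1 := hm1 hc; have a2 := hm2 hc
        simp only [Function.comp]; nlinarith
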